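/- The pairwise effective resistance R(i,j) on a finite connected graph with unit conductances, given by R = diag(L†)𝟙ᵀ + 𝟙 diag(L†)ᵀ − 2L† (entrywise: R(i,j) = L†(i,i) + L†(j,j) − 2L†(i,j)), is a metric on the vertex set. -/

import Mathlib

open Matrix
open scoped Classical

section Aux

variable {V : Type*} [Fintype V] [DecidableEq V]

/-- Symmetric matrix moves across dot products. -/
private lemma symm_dot (B : Matrix V V ℝ) (hB : Bᵀ = B) (a b : V → ℝ) :
    a ⬝ᵥ (B *ᵥ b) = (B *ᵥ a) ⬝ᵥ b := by
  rw [Matrix.dotProduct_mulVec, ← Matrix.mulVec_transpose, hB]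

/-- On a connected graph, a vector in the kernel of the quadratic form of the
Laplacian with zero sum is zero. -/
private lemma aux_zero (G : SimpleGraph V) (hG : G.Connected) (x : V → ℝ)
    (hq : x ⬝ᵥ (G.lapMatrix ℝ *ᵥ x) = 0) (hs : ∑ v, x v = 0) : x = 0 := by
  have h0 : Matrix.toLinearMap₂' ℝ (G.lapMatrix ℝ) x x = 0 := by
    rwa [Matrix.toLinearMap₂'_apply']
  rw [SimpleGraph.lapMatrix_toLinearMap₂'_apply'_eq_zero_iff_forall_reachable] at h0
  obtain ⟨v₀⟩ := hG.nonempty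
  have hconst : ∀ v, x v = x v₀ := fun v => h0 v v₀ (hG.preconnected v v₀)
  have hcard : (Fintype.card V : ℝ) * x v₀ = 0 := by
    rw [← hs, Finset.sum_congr rfl (fun v _ => hconst v), Finset.sum_const,
      nsmul_eq_mul, Finset.card_univ]
  have hv₀ : x v₀ = 0 := by
    have hc : (Fintype.card V : ℝ) ≠ 0 := by
      have hp : 0 < Fintype.card V := Fintype.card_pos_iff.mpr ⟨v₀⟩
      exact_mod_cast hp.ne'
    exact (mul_eq_zero.mp hcard).resolve_left hc
  funext v
  simp [hconst v, hv₀]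

/-- Projection property: `L L† x = x` for zero-sum `x`. -/
private lemma aux_proj (G : SimpleGraph V) (hG : G.Connected) (Ldag : Matrix V V ℝ)
    (h1 : G.lapMatrix ℝ * Ldag * G.lapMatrix ℝ = G.lapMatrix ℝ)
    (h3 : (G.lapMatrix ℝ * Ldag)ᵀ = G.lapMatrix ℝ * Ldag)
    (x : V → ℝ) (hs : ∑ v, x v = 0) :
    G.lapMatrix ℝ *ᵥ (Ldag *ᵥ x) = x := by
  set L := G.lapMatrix ℝ with hLdef
  set P := L * Ldag with hPdef
  set y := x - P *ᵥ x with hydef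
  have hPL : P * L = L := h1
  have hkey : ∀ z : V → ℝ, (L *ᵥ z) ⬝ᵥ y = 0 := by
    intro z
    have e1 : (L *ᵥ z) ⬝ᵥ (P *ᵥ x) = (P *ᵥ (L *ᵥ z)) ⬝ᵥ x := symm_dot P h3 _ _
    have e2 : P *ᵥ (L *ᵥ z) = L *ᵥ z := by
      rw [Matrix.mulVec_mulVec, hPL]
    rw [hydef, dotProduct_sub, e1, e2, sub_self]
  have hq : y ⬝ᵥ (L *ᵥ y) = 0 := by
    rw [dotProduct_comm]; exact hkey y
  have hsy : ∑ v, y v = 0 := by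
    have hsum : ∑ v, (P *ᵥ x) v = (fun _ => (1 : ℝ)) ⬝ᵥ (P *ᵥ x) := by
      simp [dotProduct]
    have h1P : (fun _ => (1 : ℝ)) ⬝ᵥ (P *ᵥ x) = 0 := by
      rw [Matrix.dotProduct_mulVec]
      have hv1 : (fun _ => (1 : ℝ)) ᵥ* P = 0 := by
        rw [hPdef, ← Matrix.vecMul_vecMul]
        have hL1 : (fun _ => (1 : ℝ)) ᵥ* L = 0 := by
          rw [← Matrix.mulVec_transpose, (SimpleGraph.isSymm_lapMatrix ℝ G : Lᵀ = L)]
          exact G.lapMatrix_mulVec_const_eq_zero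
        rw [hL1, Matrix.zero_vecMul]
      rw [hv1, zero_dotProduct]
    simp only [hydef, Pi.sub_apply, Finset.sum_sub_distrib, hs, hsum, h1P, sub_zero]
  have hy0 : y = 0 := aux_zero G hG y hq hsy
  have hxe : x = P *ᵥ x := by
    have := hy0
    rw [hydef, sub_eq_zero] at this
    exact this
  rw [Matrix.mulVec_mulVec]
  exact hxe.symm

/-- Maximum principle: if `L v = e_i - e_j` then `v` attains its maximum at `i`. -/
private lemma aux_max (G : SimpleGraph V) (hG : G.Connected) {i j : V} (hij : i ≠ j)
    (v : V → ℝ) (hv : G.lapMatrix ℝ *ᵥ v = Pi.single i 1 - Pi.single j 1) :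
    ∀ k, v k ≤ v i := by
  obtain ⟨m, -, hm⟩ := Finset.exists_max_image Finset.univ v ⟨i, Finset.mem_univ i⟩
  have hm' : ∀ u, v u ≤ v m := fun u => hm u (Finset.mem_univ u)
  -- propagation: a maximal vertex ≠ i passes maximality to neighbors
  have key : ∀ c, v c = v m → c ≠ i → ∀ d, G.Adj c d → v d = v m := by
    intro c hc hci d hcd
    have hentry : (G.lapMatrix ℝ *ᵥ v) c = ∑ u ∈ G.neighborFinset c, (v c - v u) := by
      rw [SimpleGraph.lapMatrix_mulVec_apply, Finset.sum_sub_distrib, Finset.sum_const,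
        SimpleGraph.card_neighborFinset_eq_degree, nsmul_eq_mul]
    have hle : (G.lapMatrix ℝ *ᵥ v) c ≤ 0 := by
      rw [hv, Pi.sub_apply, Pi.single_eq_of_ne hci]
      have hj : (0 : ℝ) ≤ (Pi.single j 1 : V → ℝ) c := by
        rcases eq_or_ne c j with h | h
        · subst h; simp
        · rw [Pi.single_eq_of_ne h]
      linarith
    have hterms : ∀ u ∈ G.neighborFinset c, 0 ≤ v c - v u := by
      intro u _
      rw [hc]; exact sub_nonneg.mpr (hm' u)
    have hsum0 : ∑ u ∈ G.neighborFinset c, (v c - v u) = 0 :=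
      le_antisymm (by rw [← hentry]; exact hle) (Finset.sum_nonneg hterms)
    have hd : v c - v d = 0 :=
      (Finset.sum_eq_zero_iff_of_nonneg hterms).mp hsum0 d
        ((G.mem_neighborFinset c d).mpr hcd)
    have hvd : v d = v c := by linarith
    rw [hvd, hc]
  have claim : ∀ a b : V, G.Walk a b → v a = v m → (v b = v m ∨ v i = v m) := by
    intro a b w
    induction w with
    | nil => exact fun h => Or.inl h
    | cons hadj p ih =>
      rename_i c d e
      intro hc
      by_cases hci : c = i
      · right; rw [← hci]; exact hc
      · exact ih (key c hc hci d hadj)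
  obtain ⟨w⟩ := hG.preconnected m i
  have hvi : v i = v m := by
    rcases claim m i w rfl with h | h <;> exact h
  intro k; rw [hvi]; exact hm' k

end Aux

/-- For a finite connected graph with unit conductances, the pairwise effective
resistance `R(i,j) = (e_i - e_j)ᵀ L† (e_i - e_j)`, where `L†` is the Moore–Penrose
pseudoinverse of the combinatorial Laplacian, is a metric on the vertex set. -/
theorem stmt_18 {V : Type*} [Fintype V] [DecidableEq V]
    (G : SimpleGraph V) (hG : G.Connected)
    (Ldag : Matrix V V ℝ)
    (h1 : G.lapMatrix ℝ * Ldag * G.lapMatrix ℝ = G.lapMatrix ℝ)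
    (h2 : Ldag * G.lapMatrix ℝ * Ldag = Ldag)
    (h3 : (G.lapMatrix ℝ * Ldag)ᵀ = G.lapMatrix ℝ * Ldag)
    (h4 : (Ldag * G.lapMatrix ℝ)ᵀ = Ldag * G.lapMatrix ℝ)
    (R : V → V → ℝ)
    (hR : ∀ i j, R i j = dotProduct (Pi.single i 1 - Pi.single j 1)
      (Ldag.mulVec (Pi.single i 1 - Pi.single j 1))) :
    (∀ i j, 0 ≤ R i j) ∧
    (∀ i j, R i j = 0 ↔ i = j) ∧
    (∀ i j, R i j = R j i) ∧
    (∀ i j k, R i k ≤ R i j + R j k) := by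
  set L := G.lapMatrix ℝ with hLdef
  have hA : Lᵀ = L := SimpleGraph.isSymm_lapMatrix ℝ G
  -- Ldag is symmetric (uniqueness of the Moore–Penrose inverse)
  have hCA : Ldagᵀ * L = L * Ldag := by
    calc Ldagᵀ * L = Ldagᵀ * Lᵀ := by rw [hA]
      _ = (L * Ldag)ᵀ := (Matrix.transpose_mul _ _).symm
      _ = L * Ldag := h3
  have hAC : L * Ldagᵀ = Ldag * L := by
    calc L * Ldagᵀ = Lᵀ * Ldagᵀ := by rw [hA]
      _ = (Ldag * L)ᵀ := (Matrix.transpose_mul _ _).symm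
      _ = Ldag * L := h4
  have hC1 : L * Ldagᵀ * L = L := by
    have h := congrArg Matrix.transpose h1
    rw [Matrix.transpose_mul, Matrix.transpose_mul, hA, ← Matrix.mul_assoc] at h
    exact h
  have hC2 : Ldagᵀ * L * Ldagᵀ = Ldagᵀ := by
    have h := congrArg Matrix.transpose h2
    rw [Matrix.transpose_mul, Matrix.transpose_mul, hA, ← Matrix.mul_assoc] at h
    exact h
  have hACsymm : (L * Ldagᵀ)ᵀ = L * Ldagᵀ := by rw [hAC]; exact h4
  have hCAsymm : (Ldagᵀ * L)ᵀ = Ldagᵀ * L := by rw [hCA]; exact h3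
  have step1 : L * Ldag = L * Ldagᵀ := by
    calc L * Ldag = (L * Ldagᵀ * L) * Ldag := by rw [hC1]
      _ = (L * Ldagᵀ) * (L * Ldag) := by rw [Matrix.mul_assoc (L * Ldagᵀ)]
      _ = (L * Ldagᵀ)ᵀ * (L * Ldag)ᵀ := by rw [hACsymm, h3]
      _ = ((L * Ldag) * (L * Ldagᵀ))ᵀ := (Matrix.transpose_mul _ _).symm
      _ = ((L * Ldag * L) * Ldagᵀ)ᵀ := by rw [Matrix.mul_assoc (L * Ldag)]
      _ = (L * Ldagᵀ)ᵀ := by rw [h1]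
      _ = L * Ldagᵀ := hACsymm
  have step2 : Ldag * L = Ldagᵀ * L := by
    calc Ldag * L = Ldag * (L * Ldagᵀ * L) := by rw [hC1]
      _ = (Ldag * L) * (Ldagᵀ * L) := by simp only [Matrix.mul_assoc]
      _ = (Ldag * L)ᵀ * (Ldagᵀ * L)ᵀ := by rw [h4, hCAsymm]
      _ = ((Ldagᵀ * L) * (Ldag * L))ᵀ := (Matrix.transpose_mul _ _).symm
      _ = (Ldagᵀ * (L * Ldag * L))ᵀ := by simp only [Matrix.mul_assoc]
      _ = (Ldagᵀ * L)ᵀ := by rw [h1]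
      _ = Ldagᵀ * L := hCAsymm
  have hsymm : Ldagᵀ = Ldag := by
    calc Ldagᵀ = Ldagᵀ * L * Ldagᵀ := hC2.symm
      _ = Ldag * L * Ldagᵀ := by rw [← step2]
      _ = Ldag * (L * Ldagᵀ) := Matrix.mul_assoc _ _ _
      _ = Ldag * (L * Ldag) := by rw [← step1]
      _ = Ldag * L * Ldag := (Matrix.mul_assoc _ _ _).symm
      _ = Ldag := h2
  -- basic facts
  have hsum : ∀ i j : V, ∑ v, (Pi.single i 1 - Pi.single j 1 : V → ℝ) v = 0 := by
    intro i j
    simp [Finset.sum_sub_distrib, Finset.sum_pi_single']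
  have hproj' : ∀ i j : V,
      L *ᵥ (Ldag *ᵥ (Pi.single i 1 - Pi.single j 1)) = Pi.single i 1 - Pi.single j 1 :=
    fun i j => aux_proj G hG Ldag h1 h3 _ (hsum i j)
  have hRform : ∀ i j : V, R i j =
      (Ldag *ᵥ (Pi.single i 1 - Pi.single j 1)) ⬝ᵥ
        (L *ᵥ (Ldag *ᵥ (Pi.single i 1 - Pi.single j 1))) := by
    intro i j
    rw [hR]
    set x := (Pi.single i 1 - Pi.single j 1 : V → ℝ) with hx
    conv_lhs => rw [← h2]
    rw [← Matrix.mulVec_mulVec, ← Matrix.mulVec_mulVec, symm_dot Ldag hsymm]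
  have hnonneg : ∀ i j, 0 ≤ R i j := by
    intro i j
    rw [hRform]
    have := (SimpleGraph.posSemidef_lapMatrix ℝ G).dotProduct_mulVec_nonneg (Ldag *ᵥ (Pi.single i 1 - Pi.single j 1))
    simpa using this
  have hzero : ∀ i j, R i j = 0 ↔ i = j := by
    intro i j
    constructor
    · intro h0
      set x := (Pi.single i 1 - Pi.single j 1 : V → ℝ) with hx
      set y := Ldag *ᵥ x with hy
      have hq : y ⬝ᵥ (L *ᵥ y) = 0 := by rw [← hRform i j]; exact h0
      have h00 : Matrix.toLinearMap₂' ℝ L y y = 0 := by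
        rwa [Matrix.toLinearMap₂'_apply']
      rw [SimpleGraph.lapMatrix_toLinearMap₂'_apply'_eq_zero_iff_forall_reachable] at h00
      have hlin : Matrix.toLin' L y = 0 :=
        by rw [Matrix.toLin'_apply]; exact (SimpleGraph.lapMatrix_mulVec_eq_zero_iff_forall_reachable G).mpr h00
      have hLy : L *ᵥ y = 0 := by rwa [Matrix.toLin'_apply] at hlin
      have hx0 : x = 0 := by
        show x = 0
        calc x = L *ᵥ y := (hproj' i j).symm
          _ = 0 := hLy
      by_contra hij
      have := congrFun hx0 i
      simp [hx, Pi.single_apply, hij] at this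
    · rintro rfl
      rw [hR]; simp
  have hsym : ∀ i j, R i j = R j i := by
    intro i j
    rw [hR, hR,
      show (Pi.single j 1 - Pi.single i 1 : V → ℝ) = -(Pi.single i 1 - Pi.single j 1) from
        (neg_sub _ _).symm,
      Matrix.mulVec_neg, dotProduct_neg, neg_dotProduct, neg_neg]
  refine ⟨hnonneg, hzero, hsym, ?_⟩
  intro i j k
  by_cases hij : i = j
  · subst hij
    rw [(hzero i i).mpr rfl, zero_add]
  by_cases hjk : j = k
  · subst hjk
    rw [(hzero j j).mpr rfl, add_zero]
  by_cases hik : i = k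
  · subst hik
    rw [(hzero i i).mpr rfl]
    exact add_nonneg (hnonneg _ _) (hnonneg _ _)
  -- main case
  set xik := (Pi.single i 1 - Pi.single k 1 : V → ℝ) with hxik
  set xij := (Pi.single i 1 - Pi.single j 1 : V → ℝ) with hxij
  set xjk := (Pi.single j 1 - Pi.single k 1 : V → ℝ) with hxjk
  set v := Ldag *ᵥ xik with hv
  set w := Ldag *ᵥ xij with hw
  set u := Ldag *ᵥ xjk with hu
  have hLw : L *ᵥ w = xij := hproj' i j
  have hLu : L *ᵥ u = xjk := hproj' j k
  have dotL : ∀ (a b : V) (z : V → ℝ), (Pi.single a 1 - Pi.single b 1) ⬝ᵥ z = z a - z b := by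
    intro a b z
    rw [sub_dotProduct, single_dotProduct, single_dotProduct,
      one_mul, one_mul]
  have hwmin : ∀ t, w j ≤ w t := by
    intro t
    have hneg : L *ᵥ (-w) = Pi.single j 1 - Pi.single i 1 := by
      rw [Matrix.mulVec_neg, hLw, hxij, neg_sub]
    have := aux_max G hG (fun h => hij h.symm) (-w) hneg t
    simpa using this
  have humax : ∀ t, u t ≤ u j := aux_max G hG hjk u hLu
  have hRik : R i k = v i - v k := by rw [hR]; exact dotL i k v
  have hRij : R i j = w i - w j := by rw [hR]; exact dotL i j w
  have hRjk : R j k = u j - u k := by rw [hR]; exact dotL j k u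
  have hswap1 : v i - v j = w i - w k := by
    have hs1 : xij ⬝ᵥ v = w ⬝ᵥ xik := symm_dot Ldag hsymm xij xik
    rw [hxij, dotL i j v] at hs1
    rw [dotProduct_comm, hxik, dotL i k w] at hs1
    exact hs1
  have hswap2 : v j - v k = u i - u k := by
    have hs2 : xjk ⬝ᵥ v = u ⬝ᵥ xik := symm_dot Ldag hsymm xjk xik
    rw [hxjk, dotL j k v] at hs2
    rw [dotProduct_comm, hxik, dotL i k u] at hs2
    exact hs2
  have e1 : v i - v j ≤ R i j := by
    rw [hRij, hswap1]
    have := hwmin k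
    linarith
  have e2 : v j - v k ≤ R j k := by
    rw [hRjk, hswap2]
    have := humax i
    linarith
  rw [hRik]
  linarith
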